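/- In the separable case with fixed-point values δ, δ̃ > 0 at z = −ρ, define T = (1/ρ)(I_N + δ̃ D)^{-1} and T̃ = (1/ρ)(I_K + δ D̃)^{-1}, γ = (1/K) tr(D² T²) and γ̃ = (1/K) tr(D̃² T̃²). Then ρ² γ γ̃ < 1. -/

import Mathlib

lemma aux_le (ρ s x : ℝ) (hρ : 0 < ρ) (hs : 0 < s) (hx : 0 ≤ x) :
    x ^ 2 / (ρ ^ 2 * (1 + s * x) ^ 2) ≤ x / (ρ * (1 + s * x)) / (ρ * s) := by
  have hc : (0:ℝ) < 1 + s * x := by nlinarith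
  rw [div_div, div_le_div_iff₀ (by positivity) (by positivity)]
  nlinarith [mul_nonneg (mul_nonneg hx (mul_pos hρ hρ).le) hc.le]

lemma aux_lt (ρ s x : ℝ) (hρ : 0 < ρ) (hs : 0 < s) (hx : 0 < x) :
    x ^ 2 / (ρ ^ 2 * (1 + s * x) ^ 2) < x / (ρ * (1 + s * x)) / (ρ * s) := by
  have hc : (0:ℝ) < 1 + s * x := by nlinarith
  rw [div_div, div_lt_div_iff₀ (by positivity) (by positivity)]
  nlinarith [mul_pos (mul_pos hx (mul_pos hρ hρ)) hc]

/-- In the separable case at `z = −ρ`, with `γ = (1/K) tr(D²T²)` and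
`γ̃ = (1/K) tr(D̃²T̃²)` where `T = (1/ρ)(I + δ̃D)⁻¹` and `T̃ = (1/ρ)(I + δD̃)⁻¹`,
one has `ρ²γγ̃ < 1`. -/
theorem stmt10 (N K : ℕ) (hK : 0 < K) (ρ : ℝ) (hρ : 0 < ρ)
    (d : Fin N → ℝ) (dt : Fin K → ℝ)
    (hd : ∀ n, 0 ≤ d n) (hdt : ∀ k, 0 ≤ dt k)
    (hd' : ∃ n, 0 < d n) (hdt' : ∃ k, 0 < dt k)
    (δ δt : ℝ) (hδ : 0 < δ) (hδt : 0 < δt)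
    (hfix : δ = (1 / K) * ∑ n, d n / (ρ * (1 + δt * d n)))
    (hfixt : δt = (1 / K) * ∑ k, dt k / (ρ * (1 + δ * dt k)))
    (γ γt : ℝ)
    (hγ : γ = (1 / K) * ∑ n, d n ^ 2 / (ρ ^ 2 * (1 + δt * d n) ^ 2))
    (hγt : γt = (1 / K) * ∑ k, dt k ^ 2 / (ρ ^ 2 * (1 + δ * dt k) ^ 2)) :
    ρ ^ 2 * γ * γt < 1 := by
  have hKpos : (0:ℝ) < (K:ℝ) := by exact_mod_cast hK
  have hγnn : 0 ≤ γ := by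
    rw [hγ]
    have : ∀ n : Fin N, 0 ≤ d n ^ 2 / (ρ ^ 2 * (1 + δt * d n) ^ 2) := by
      intro n
      have hc : (0:ℝ) < 1 + δt * d n := by nlinarith [hd n]
      positivity
    positivity
  -- strict bound for γ
  have h1 : γ < δ / (ρ * δt) := by
    obtain ⟨n0, hn0⟩ := hd'
    have hsum : (∑ n, d n ^ 2 / (ρ ^ 2 * (1 + δt * d n) ^ 2)) <
        ∑ n, d n / (ρ * (1 + δt * d n)) / (ρ * δt) := by
      apply Finset.sum_lt_sum
      · intro i _; exact aux_le ρ δt (d i) hρ hδt (hd i)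
      · exact ⟨n0, Finset.mem_univ n0, aux_lt ρ δt (d n0) hρ hδt hn0⟩
    calc γ = (1 / K) * ∑ n, d n ^ 2 / (ρ ^ 2 * (1 + δt * d n) ^ 2) := hγ
      _ < (1 / K) * ∑ n, d n / (ρ * (1 + δt * d n)) / (ρ * δt) := by
          apply mul_lt_mul_of_pos_left hsum (by positivity)
      _ = δ / (ρ * δt) := by
          rw [hfix, ← Finset.sum_div]; ring
  have h2 : γt < δt / (ρ * δ) := by
    obtain ⟨k0, hk0⟩ := hdt'
    have hsum : (∑ k, dt k ^ 2 / (ρ ^ 2 * (1 + δ * dt k) ^ 2)) <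
        ∑ k, dt k / (ρ * (1 + δ * dt k)) / (ρ * δ) := by
      apply Finset.sum_lt_sum
      · intro i _; exact aux_le ρ δ (dt i) hρ hδ (hdt i)
      · exact ⟨k0, Finset.mem_univ k0, aux_lt ρ δ (dt k0) hρ hδ hk0⟩
    calc γt = (1 / K) * ∑ k, dt k ^ 2 / (ρ ^ 2 * (1 + δ * dt k) ^ 2) := hγt
      _ < (1 / K) * ∑ k, dt k / (ρ * (1 + δ * dt k)) / (ρ * δ) := by
          apply mul_lt_mul_of_pos_left hsum (by positivity)
      _ = δt / (ρ * δ) := by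
          rw [hfixt, ← Finset.sum_div]; ring
  have hbound : δ / (ρ * δt) * (δt / (ρ * δ)) = 1 / ρ ^ 2 := by
    field_simp
  have h3 : γ * γt < 1 / ρ ^ 2 := by
    rcases lt_or_ge 0 γt with hpt | hpt
    · calc γ * γt ≤ δ / (ρ * δt) * γt :=
            mul_le_mul_of_nonneg_right h1.le hpt.le
        _ < δ / (ρ * δt) * (δt / (ρ * δ)) :=
            mul_lt_mul_of_pos_left h2 (by positivity)
        _ = 1 / ρ ^ 2 := hbound
    · have : γ * γt ≤ 0 := mul_nonpos_of_nonneg_of_nonpos hγnn hpt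
      calc γ * γt ≤ 0 := this
        _ < 1 / ρ ^ 2 := by positivity
  calc ρ ^ 2 * γ * γt = ρ ^ 2 * (γ * γt) := by ring
    _ < ρ ^ 2 * (1 / ρ ^ 2) := mul_lt_mul_of_pos_left h3 (by positivity)
    _ = 1 := by field_simp
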